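/- arXiv:2009.11487 — 2 statements merged into one kernel-verified Lean document; each statement's English description precedes it below -/
import Mathlib

section
/- For a smooth map n from an open set Ω ⊂ ℝ³ to the unit sphere S², the identity |n ∧ curl n|² = |(∇n) n|² holds pointwise, where (∇n)n denotes the directional derivative of n along n. -/
open scoped BigOperators

/-- Partial derivative `∂_j f_i (x)` of a vector field `f : ℝ³ → ℝ³`. -/
noncomputable def pd3 (f : (Fin 3 → ℝ) → (Fin 3 → ℝ)) (x : Fin 3 → ℝ) (i j : Fin 3) : ℝ :=
  fderiv ℝ f x (Pi.single j 1) i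

/-- The curl `∇ × f` of a vector field `f : ℝ³ → ℝ³`. -/
noncomputable def curl3 (f : (Fin 3 → ℝ) → (Fin 3 → ℝ)) (x : Fin 3 → ℝ) : Fin 3 → ℝ :=
  ![pd3 f x 2 1 - pd3 f x 1 2, pd3 f x 0 2 - pd3 f x 2 0, pd3 f x 1 0 - pd3 f x 0 1]

/-- For a C¹ map `n` from an open set `Ω ⊆ ℝ³` to the unit sphere `S²`, pointwise
`|n ∧ curl n|² = |(∇n) n|²`, where `(∇n)n` has `i`-th component `∑ j, n j ∂_j n_i`. -/
theorem stmt0 (Ω : Set (Fin 3 → ℝ)) (hΩ : IsOpen Ω)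
    (n : (Fin 3 → ℝ) → (Fin 3 → ℝ))
    (hn : ∀ x ∈ Ω, DifferentiableAt ℝ n x)
    (hunit : ∀ x ∈ Ω, ∑ i, (n x i) ^ 2 = 1) :
    ∀ x ∈ Ω,
      ∑ i, (crossProduct (n x) (curl3 n x) i) ^ 2
        = ∑ i, (∑ j, n x j * pd3 n x i j) ^ 2 := by
  intro x hx
  have hd : HasFDerivAt n (fderiv ℝ n x) x := (hn x hx).hasFDerivAt
  set D := fderiv ℝ n x with hD
  -- derivative of each component
  have hcomp : ∀ i : Fin 3, HasFDerivAt (fun y => n y i)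
      ((ContinuousLinearMap.proj i).comp D) x := fun i =>
    ((ContinuousLinearMap.proj i).hasFDerivAt.comp x hd : )
  -- derivative of the sum of squares
  have hsq : ∀ i : Fin 3, HasFDerivAt (fun y => n y i * n y i)
      (n x i • ((ContinuousLinearMap.proj i).comp D)
        + n x i • ((ContinuousLinearMap.proj i).comp D)) x := fun i =>
    (hcomp i).mul (hcomp i)
  have hsum : HasFDerivAt (fun y => ∑ i : Fin 3, n y i * n y i)
      (∑ i : Fin 3, (n x i • ((ContinuousLinearMap.proj i).comp D)
        + n x i • ((ContinuousLinearMap.proj i).comp D))) x := by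
    exact HasFDerivAt.fun_sum (fun i _ => hsq i)
  -- the sum of squares is eventually 1
  have hev : (fun y => ∑ i : Fin 3, n y i * n y i) =ᶠ[nhds x] fun _ => (1 : ℝ) := by
    filter_upwards [hΩ.mem_nhds hx] with y hy
    have := hunit y hy
    simpa [pow_two] using this
  have hzero : HasFDerivAt (fun y => ∑ i : Fin 3, n y i * n y i)
      (0 : (Fin 3 → ℝ) →L[ℝ] ℝ) x :=
    (hasFDerivAt_const (1 : ℝ) x).congr_of_eventuallyEq hev
  have hL : (∑ i : Fin 3, (n x i • ((ContinuousLinearMap.proj i).comp D)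
        + n x i • ((ContinuousLinearMap.proj i).comp D))) = 0 := hsum.unique hzero
  -- constraints: ∑ i, n x i * ∂_j n_i = 0
  have hC : ∀ j : Fin 3, ∑ i : Fin 3, n x i * pd3 n x i j = 0 := by
    intro j
    have := congrFun (congrArg DFunLike.coe hL) (Pi.single j 1)
    simp only [ContinuousLinearMap.sum_apply, ContinuousLinearMap.add_apply,
      ContinuousLinearMap.smul_apply, ContinuousLinearMap.coe_comp', Function.comp_apply,
      ContinuousLinearMap.proj_apply, ContinuousLinearMap.zero_apply, smul_eq_mul] at this
    have h2 : (2 : ℝ) * ∑ i : Fin 3, n x i * pd3 n x i j = 0 := by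
      rw [Finset.mul_sum]
      rw [← this]
      apply Finset.sum_congr rfl
      intro i _
      simp [pd3, hD]
      ring
    linarith
  have h0 := hC 0
  have h1 := hC 1
  have h2 := hC 2
  simp only [Fin.sum_univ_three] at h0 h1 h2 ⊢
  simp only [cross_apply, curl3]
  simp only [Matrix.cons_val_zero, Matrix.cons_val_one, Matrix.head_cons,
    Matrix.cons_val_two, Matrix.tail_cons]
  linear_combination h0 * ((n x 0 * pd3 n x 0 0 + n x 1 * pd3 n x 1 0 + n x 2 * pd3 n x 2 0) - 2 * (n x 0 * pd3 n x 0 0 + n x 1 * pd3 n x 0 1 + n x 2 * pd3 n x 0 2)) + h1 * ((n x 0 * pd3 n x 0 1 + n x 1 * pd3 n x 1 1 + n x 2 * pd3 n x 2 1) - 2 * (n x 0 * pd3 n x 1 0 + n x 1 * pd3 n x 1 1 + n x 2 * pd3 n x 1 2)) + h2 * ((n x 0 * pd3 n x 0 2 + n x 1 * pd3 n x 1 2 + n x 2 * pd3 n x 2 2) - 2 * (n x 0 * pd3 n x 2 0 + n x 1 * pd3 n x 2 1 + n x 2 * pd3 n x 2 2))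
end

section
/- Let W : ℝ → [0,∞] be continuous on [0, s₊] with W(0) = W(s₊) = 0 and W > 0 on (0, s₊), and let β > 0. Then for any a > 0 and any Lipschitz function s : [−a, a] → ℝ with s(−a) = 0 and s(a) = s₊, one has ∫_{−a}^{a} (β ṡ(t)² + W(s(t))) dt ≥ 2√β ∫_0^{s₊} √(W(τ)) dτ. -/
open MeasureTheory Filter Topology ENNReal NNReal

private lemma quot_tendsto {F : ℝ → ℝ} {x d : ℝ} (hd : HasDerivAt F d x) :
    Tendsto (fun n : ℕ => (F (x + ((n : ℝ) + 1)⁻¹) - F x) / ((n : ℝ) + 1)⁻¹) atTop (𝓝 d) := by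
  have h1 : Tendsto (fun n : ℕ => ((n : ℝ) + 1)⁻¹) atTop (𝓝[≠] 0) := by
    apply tendsto_nhdsWithin_of_tendsto_nhds_of_eventually_within
    · simpa [one_div] using tendsto_one_div_add_atTop_nhds_zero_nat (𝕜 := ℝ)
    · exact Eventually.of_forall fun n => by
        have : (0:ℝ) < ((n : ℝ) + 1)⁻¹ := by positivity
        simpa using this.ne'
  have h2 := hd.tendsto_slope_zero.comp h1
  simpa [Function.comp_def, smul_eq_mul, div_eq_inv_mul] using h2

/-- FTC-type inequality for Lipschitz functions: `F b - F a ≤ ∫⁻ deriv F` over `[a,b]`. -/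
private lemma lip_key (F : ℝ → ℝ) (L : NNReal) (hF : LipschitzWith L F)
    {a b : ℝ} (hab : a ≤ b) :
    ENNReal.ofReal (F b - F a) ≤ ∫⁻ t in Set.Icc a b, ENNReal.ofReal (deriv F t) := by
  have hFc : Continuous F := hF.continuous
  set h : ℕ → ℝ := fun n => ((n : ℝ) + 1)⁻¹ with hh
  have hpos : ∀ n, 0 < h n := fun n => by positivity
  set q : ℕ → ℝ → ℝ := fun n t => (F (t + h n) - F t) / h n with hqdef
  have hqc : ∀ n, Continuous (q n) := fun n =>
    ((hFc.comp (continuous_id.add continuous_const)).sub hFc).div_const _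
  have hqb : ∀ n t, q n t ≤ (L : ℝ) := by
    intro n t
    rw [div_le_iff₀ (hpos n)]
    calc F (t + h n) - F t ≤ |F (t + h n) - F t| := le_abs_self _
      _ ≤ (L : ℝ) * |t + h n - t| := by
          have := hF.dist_le_mul (t + h n) t
          simpa [Real.dist_eq] using this
      _ = (L : ℝ) * h n := by rw [add_sub_cancel_left, abs_of_pos (hpos n)]
  -- the primitive of F
  set Φ : ℝ → ℝ := fun x => ∫ u in a..x, F u with hΦ
  have hΦd : ∀ x, HasDerivAt Φ (F x) x := fun x =>
    intervalIntegral.integral_hasDerivAt_right (hFc.intervalIntegrable _ _)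
      hFc.stronglyMeasurable.stronglyMeasurableAtFilter hFc.continuousAt
  -- value of the integral of the difference quotient
  have hint : ∀ n, ∫ t in Set.Icc a b, q n t
      = (Φ (b + h n) - Φ b) / h n - (Φ (a + h n) - Φ a) / h n := by
    intro n
    rw [MeasureTheory.integral_Icc_eq_integral_Ioc, ← intervalIntegral.integral_of_le hab]
    have hi1 : IntervalIntegrable (fun t => F (t + h n)) volume a b :=
      (hFc.comp (continuous_id.add continuous_const)).intervalIntegrable a b
    have e0 : ∫ t in a..b, q n t
        = ((∫ t in a..b, F (t + h n)) - ∫ t in a..b, F t) / h n := by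
      simp only [hqdef]
      rw [intervalIntegral.integral_div,
        intervalIntegral.integral_sub hi1 (hFc.intervalIntegrable _ _)]
    rw [e0, intervalIntegral.integral_comp_add_right]
    have e1 : ∫ t in a + h n..b + h n, F t = Φ (b + h n) - Φ (a + h n) :=
      (intervalIntegral.integral_interval_sub_left (hFc.intervalIntegrable _ _)
        (hFc.intervalIntegrable _ _)).symm
    have e2 : Φ a = 0 := intervalIntegral.integral_same
    have e3 : (∫ t in a..b, F t) = Φ b := rfl
    rw [e1, e3, e2]
    ring
  -- limit of the integrals
  have hlim : Tendsto (fun n => ∫ t in Set.Icc a b, q n t) atTop (𝓝 (F b - F a)) := by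
    have hb' := quot_tendsto (hΦd b)
    have ha' := quot_tendsto (hΦd a)
    have := hb'.sub ha'
    apply Tendsto.congr' (Eventually.of_forall fun n => (hint n).symm) this
  -- step 1 : ofReal of the integral is at most the lintegral of ofReal
  have step1 : ∀ n, ENNReal.ofReal (∫ t in Set.Icc a b, q n t)
      ≤ ∫⁻ t in Set.Icc a b, ENNReal.ofReal (q n t) := by
    intro n
    have hi : IntegrableOn (q n) (Set.Icc a b) := (hqc n).integrableOn_Icc
    have hmax : IntegrableOn (fun t => max (q n t) 0) (Set.Icc a b) := hi.pos_part
    calc ENNReal.ofReal (∫ t in Set.Icc a b, q n t)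
        ≤ ENNReal.ofReal (∫ t in Set.Icc a b, max (q n t) 0) :=
          ENNReal.ofReal_le_ofReal (integral_mono hi hmax fun t => le_max_left _ _)
      _ = ∫⁻ t in Set.Icc a b, ENNReal.ofReal (max (q n t) 0) :=
          ofReal_integral_eq_lintegral_ofReal hmax (ae_of_all _ fun t => le_max_right _ _)
      _ = ∫⁻ t in Set.Icc a b, ENNReal.ofReal (q n t) := by
          refine lintegral_congr fun t => ?_
          rcases le_total (q n t) 0 with h' | h'
          · simp [max_eq_right h', ENNReal.ofReal_eq_zero.2 h']
          · simp [max_eq_left h']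
  -- step 2 : a.e. convergence of the quotients to the derivative
  have step2 : ∀ᵐ t, Tendsto (fun n => q n t) atTop (𝓝 (deriv F t)) := by
    filter_upwards [hF.ae_differentiableAt (μ := volume)] with t ht
    exact quot_tendsto ht.hasDerivAt
  have step3 : ∀ᵐ t ∂(volume.restrict (Set.Icc a b)),
      Filter.limsup (fun n => ENNReal.ofReal (q n t)) atTop = ENNReal.ofReal (deriv F t) := by
    refine ae_restrict_of_ae ?_
    filter_upwards [step2] with t ht
    exact ((ENNReal.continuous_ofReal.tendsto _).comp ht).limsup_eq
  -- step 4 : reverse Fatou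
  have step4 : Filter.limsup (fun n => ∫⁻ t in Set.Icc a b, ENNReal.ofReal (q n t)) atTop
      ≤ ∫⁻ t in Set.Icc a b, ENNReal.ofReal (deriv F t) := by
    have hfin : ∫⁻ (_t : ℝ), (L : ℝ≥0∞) ∂(volume.restrict (Set.Icc a b)) ≠ ∞ := by
      rw [lintegral_const, Measure.restrict_apply_univ, Real.volume_Icc]
      exact ENNReal.mul_ne_top ENNReal.coe_ne_top ENNReal.ofReal_ne_top
    have hrev := limsup_lintegral_le (μ := volume.restrict (Set.Icc a b))
      (f := fun n t => ENNReal.ofReal (q n t)) (fun _ => (L : ℝ≥0∞))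
      (fun n => (hqc n).measurable.ennreal_ofReal)
      (fun n => ae_of_all _ fun t => by
        simpa using ENNReal.ofReal_le_ofReal (hqb n t)) hfin
    refine hrev.trans ?_
    exact le_of_eq (lintegral_congr_ae step3)
  -- conclusion
  have step5 : Tendsto (fun n => ENNReal.ofReal (∫ t in Set.Icc a b, q n t)) atTop
      (𝓝 (ENNReal.ofReal (F b - F a))) := (ENNReal.continuous_ofReal.tendsto _).comp hlim
  calc ENNReal.ofReal (F b - F a)
      = Filter.limsup (fun n => ENNReal.ofReal (∫ t in Set.Icc a b, q n t)) atTop :=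
        step5.limsup_eq.symm
    _ ≤ Filter.limsup (fun n => ∫⁻ t in Set.Icc a b, ENNReal.ofReal (q n t)) atTop :=
        Filter.limsup_le_limsup (Eventually.of_forall step1)
    _ ≤ ∫⁻ t in Set.Icc a b, ENNReal.ofReal (deriv F t) := step4

/-- Let `W : ℝ → [0,∞)` be continuous on `[0, sp]` (`sp` plays the role of `s₊`) with
`W(0) = W(sp) = 0` and `W > 0` on `(0, sp)`, and let `β > 0`.  Then for any `a > 0` and any
Lipschitz `s : [−a,a] → ℝ` with `s(−a) = 0`, `s(a) = sp`:
`∫_{−a}^{a} (β ṡ² + W(s)) dt ≥ 2√β ∫_0^{sp} √(W(τ)) dτ`. -/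
theorem stmt5 (W : ℝ → ℝ) (sp β : ℝ) (hsp : 0 < sp) (hβ : 0 < β)
    (hW0 : ∀ τ, 0 ≤ W τ) (hWc : ContinuousOn W (Set.Icc 0 sp))
    (hW00 : W 0 = 0) (hWs : W sp = 0) (hWpos : ∀ τ ∈ Set.Ioo 0 sp, 0 < W τ)
    (a : ℝ) (ha : 0 < a) (s : ℝ → ℝ) (K : NNReal) (hLip : LipschitzWith K s)
    (h₁ : s (-a) = 0) (h₂ : s a = sp) :
    ENNReal.ofReal (2 * Real.sqrt β * ∫ τ in (0 : ℝ)..sp, Real.sqrt (W τ))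
      ≤ ∫⁻ t in Set.Icc (-a) a, ENNReal.ofReal (β * (deriv s t) ^ 2 + W (s t)) := by
  -- clamp to [0, sp]
  set c : ℝ → ℝ := fun τ => max 0 (min τ sp) with hc
  have hc_mem : ∀ τ, c τ ∈ Set.Icc 0 sp := fun τ =>
    ⟨le_max_left _ _, max_le hsp.le (min_le_right _ _)⟩
  have hc_cont : Continuous c := continuous_const.max (continuous_id.min continuous_const)
  have hc_id : ∀ τ ∈ Set.Icc 0 sp, c τ = τ := fun τ hτ => by
    simp [hc, min_eq_left hτ.2, max_eq_right hτ.1]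
  set g : ℝ → ℝ := fun τ => Real.sqrt (W (c τ)) with hg
  have hWc_comp : Continuous fun τ => W (c τ) := hWc.comp_continuous hc_cont hc_mem
  have hg_cont : Continuous g := Real.continuous_sqrt.comp hWc_comp
  have hg_nonneg : ∀ τ, 0 ≤ g τ := fun τ => Real.sqrt_nonneg _
  -- bound on g
  obtain ⟨τ₀, hτ₀, hMmax⟩ := isCompact_Icc.exists_isMaxOn (Set.nonempty_Icc.2 hsp.le)
    hg_cont.continuousOn
  set M : ℝ := g τ₀ with hM
  have hM0 : 0 ≤ M := hg_nonneg _
  have hgM : ∀ τ, g τ ≤ M := by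
    intro τ
    have hcc : c (c τ) = c τ := hc_id _ (hc_mem τ)
    have : g τ = g (c τ) := by rw [hg]; simp only []; rw [hcc]
    rw [this]
    exact hMmax (hc_mem τ)
  -- the primitive G
  set G : ℝ → ℝ := fun u => ∫ x in (0:ℝ)..u, g x with hG
  have hGd : ∀ u, HasDerivAt G (g u) u := fun u =>
    intervalIntegral.integral_hasDerivAt_right (hg_cont.intervalIntegrable _ _)
      hg_cont.stronglyMeasurable.stronglyMeasurableAtFilter hg_cont.continuousAt
  have hGlip : LipschitzWith (⟨M, hM0⟩ : NNReal) G := by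
    apply lipschitzWith_of_nnnorm_deriv_le (fun u => (hGd u).differentiableAt)
    intro u
    rw [(hGd u).deriv]; refine NNReal.coe_le_coe.1 ?_; rw [coe_nnnorm, Real.norm_eq_abs,
      abs_of_nonneg (hg_nonneg u)]
    exact hgM u
  -- key inequality for F = G ∘ s
  have hab : (-a : ℝ) ≤ a := by linarith
  have hkey := lip_key (G ∘ s) _ (hGlip.comp hLip) hab
  -- chain rule a.e.
  have hchain : ∀ᵐ t, deriv (G ∘ s) t = g (s t) * deriv s t := by
    filter_upwards [hLip.ae_differentiableAt (μ := volume)] with t ht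
    exact ((hGd (s t)).comp t ht.hasDerivAt).deriv
  -- pointwise inequality a.e.
  have hptwise : ∀ᵐ t, ENNReal.ofReal (2 * Real.sqrt β * deriv (G ∘ s) t)
      ≤ ENNReal.ofReal (β * (deriv s t) ^ 2 + W (s t)) := by
    filter_upwards [hchain] with t ht
    rw [ht]
    apply ENNReal.ofReal_le_ofReal
    set x := deriv s t with hx
    have h1 : g (s t) ≤ Real.sqrt (W (s t)) := by
      by_cases hmem : s t ∈ Set.Icc 0 sp
      · rw [hg]; simp only []; rw [hc_id _ hmem]
      · have hzero : W (c (s t)) = 0 := by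
          rcases lt_or_ge (s t) 0 with h' | h'
          · have hcs : c (s t) = 0 := by
              rw [hc]; simp only []
              rw [min_eq_left (le_trans h'.le hsp.le), max_eq_left h'.le]
            rw [hcs, hW00]
          · have h'' : sp < s t := by
              by_contra hle
              push_neg at hle
              exact hmem ⟨h', hle⟩
            have hcs : c (s t) = sp := by
              rw [hc]; simp only []
              rw [min_eq_right h''.le, max_eq_right hsp.le]
            rw [hcs, hWs]
        rw [hg]; simp only []; rw [hzero, Real.sqrt_zero]
        exact Real.sqrt_nonneg _
    have h2 : g (s t) * x ≤ Real.sqrt (W (s t)) * |x| := by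
      calc g (s t) * x ≤ g (s t) * |x| :=
            mul_le_mul_of_nonneg_left (le_abs_self x) (hg_nonneg _)
        _ ≤ Real.sqrt (W (s t)) * |x| := mul_le_mul_of_nonneg_right h1 (abs_nonneg x)
    have h3 : 2 * (Real.sqrt β * |x|) * Real.sqrt (W (s t))
        ≤ (Real.sqrt β * |x|) ^ 2 + Real.sqrt (W (s t)) ^ 2 := two_mul_le_add_sq _ _
    have e1 : (Real.sqrt β * |x|) ^ 2 = β * x ^ 2 := by
      rw [mul_pow, Real.sq_sqrt hβ.le, sq_abs]
    have e2 : Real.sqrt (W (s t)) ^ 2 = W (s t) := Real.sq_sqrt (hW0 _)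
    calc 2 * Real.sqrt β * (g (s t) * x)
        ≤ 2 * Real.sqrt β * (Real.sqrt (W (s t)) * |x|) :=
          mul_le_mul_of_nonneg_left h2 (by positivity)
      _ = 2 * (Real.sqrt β * |x|) * Real.sqrt (W (s t)) := by ring
      _ ≤ (Real.sqrt β * |x|) ^ 2 + Real.sqrt (W (s t)) ^ 2 := h3
      _ = β * x ^ 2 + W (s t) := by rw [e1, e2]
  -- identify the boundary values
  have hI : (∫ τ in (0:ℝ)..sp, Real.sqrt (W τ)) = (G ∘ s) a - (G ∘ s) (-a) := by
    have e0 : (G ∘ s) (-a) = 0 := by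
      simp only [Function.comp_apply, h₁, hG]
      exact intervalIntegral.integral_same
    have e1 : (G ∘ s) a = ∫ τ in (0:ℝ)..sp, g τ := by
      simp only [Function.comp_apply, h₂, hG]
    rw [e0, e1, sub_zero]
    apply intervalIntegral.integral_congr
    intro τ hτ
    rw [Set.uIcc_of_le hsp.le] at hτ
    rw [hg]; simp only []; rw [hc_id _ hτ]
  -- assemble
  calc ENNReal.ofReal (2 * Real.sqrt β * ∫ τ in (0 : ℝ)..sp, Real.sqrt (W τ))
      = ENNReal.ofReal (2 * Real.sqrt β) * ENNReal.ofReal ((G ∘ s) a - (G ∘ s) (-a)) := by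
        rw [hI, ENNReal.ofReal_mul (by positivity)]
    _ ≤ ENNReal.ofReal (2 * Real.sqrt β)
        * ∫⁻ t in Set.Icc (-a) a, ENNReal.ofReal (deriv (G ∘ s) t) :=
        mul_le_mul_right hkey _
    _ = ∫⁻ t in Set.Icc (-a) a,
        ENNReal.ofReal (2 * Real.sqrt β) * ENNReal.ofReal (deriv (G ∘ s) t) :=
        (lintegral_const_mul' _ _ ENNReal.ofReal_ne_top).symm
    _ = ∫⁻ t in Set.Icc (-a) a, ENNReal.ofReal (2 * Real.sqrt β * deriv (G ∘ s) t) :=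
        lintegral_congr fun t => (ENNReal.ofReal_mul (by positivity)).symm
    _ ≤ ∫⁻ t in Set.Icc (-a) a, ENNReal.ofReal (β * (deriv s t) ^ 2 + W (s t)) :=
        lintegral_mono_ae (ae_restrict_of_ae hptwise)
end
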